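/- Let n points z^1,…,z^n ∈ ℝ with an honest subset H of size h = n − b, b < n/2, and z̄ the honest mean. Suppose ‖z^j − z̄‖ ≤ ζ for all j ∈ H. The b-trimmed mean (remove b largest and b smallest, average the remaining n − 2b) satisfies (trimean − z̄)² ≤ (2b(n−b)/(n−2b)²) ζ² = (2α(1−α)/(1−2α)²) ζ², where α = b/n. -/

import Mathlib

lemma aux_card (n m : ℕ) (h : m ≤ n) :
    (Finset.univ.filter (fun i : Fin n => i.val < m)).card = m := by
  rcases eq_or_lt_of_le h with rfl | hlt
  · have : (Finset.univ.filter (fun i : Fin m => i.val < m)) = Finset.univ := by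
      ext i; simpa using i.is_lt
    rw [this, Finset.card_univ, Fintype.card_fin]
  · rw [show (Finset.univ.filter (fun i : Fin n => i.val < m)) = Finset.Iio ⟨m, hlt⟩ by
      ext i; simp [Fin.lt_def], Fin.card_Iio]

/-- Replace-by-larger lemma: sum over `A` is at most sum over some subset of `B`
of the same cardinality, provided every value on `A` is `≤` every value on `B`. -/
lemma aux_replace {ι : Type*} [DecidableEq ι] (f : ι → ℝ) (A B : Finset ι)
    (hcmp : ∀ a ∈ A, ∀ p ∈ B, f a ≤ f p) (hcard : A.card ≤ B.card) :
    ∃ P ⊆ B, P.card = A.card ∧ ∑ a ∈ A, f a ≤ ∑ p ∈ P, f p := by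
  obtain ⟨P, hPB, hPc⟩ := Finset.exists_subset_card_eq hcard
  refine ⟨P, hPB, hPc, ?_⟩
  rcases Nat.eq_zero_or_pos A.card with h0 | hpos
  · rw [Finset.card_eq_zero.mp h0, Finset.card_eq_zero.mp (hPc.trans h0)]
  · have hPpos : 0 < (P.card : ℝ) := by exact_mod_cast hPc ▸ hpos
    rw [← mul_le_mul_iff_right₀ hPpos]
    calc (P.card : ℝ) * ∑ a ∈ A, f a = ∑ a ∈ A, (P.card : ℝ) * f a := by
          rw [Finset.mul_sum]
      _ ≤ ∑ _a ∈ A, ∑ p ∈ P, f p := by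
          refine Finset.sum_le_sum fun a ha => ?_
          have := Finset.card_nsmul_le_sum P f (f a)
            (fun p hp => hcmp a ha p (hPB hp))
          simpa [nsmul_eq_mul] using this
      _ = (P.card : ℝ) * ∑ p ∈ P, f p := by
          rw [Finset.sum_const, hPc, nsmul_eq_mul]

/-- Key bound: sum over the retained block `R` of centered values is at most
`(|K| - |R|) ζ`, where `K` is the honest set. -/
lemma aux_sum_bound {ι : Type*} [DecidableEq ι] (f : ι → ℝ) (ζ : ℝ)
    (K R B : Finset ι) (hdisj : Disjoint R B)
    (h0 : ∑ j ∈ K, f j = 0)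
    (hbd : ∀ j ∈ K, -ζ ≤ f j)
    (hcmp : ∀ a ∈ R \ K, ∀ p ∈ B ∩ K, f a ≤ f p)
    (hcard : (R \ K).card ≤ (B ∩ K).card) :
    ∑ i ∈ R, f i ≤ ((K.card - R.card : ℕ) : ℝ) * ζ := by
  obtain ⟨P, hPB, hPc, hle⟩ := aux_replace f (R \ K) (B ∩ K) hcmp hcard
  have hPK : P ⊆ K := hPB.trans (Finset.inter_subset_right)
  have hQdisj : Disjoint (R ∩ K) P :=
    (hdisj.mono Finset.inter_subset_left (hPB.trans Finset.inter_subset_left))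
  set Q : Finset ι := (R ∩ K) ∪ P with hQ
  have hQK : Q ⊆ K := Finset.union_subset Finset.inter_subset_right hPK
  have hQcard : Q.card = R.card := by
    rw [hQ, Finset.card_union_of_disjoint hQdisj, hPc,
      Finset.card_inter_add_card_sdiff]
  have h1 : ∑ i ∈ R, f i ≤ ∑ i ∈ Q, f i := by
    rw [hQ, Finset.sum_union hQdisj, ← Finset.sum_inter_add_sum_sdiff R K f]
    exact add_le_add_right hle _
  have h2 : ∑ i ∈ Q, f i = - ∑ i ∈ K \ Q, f i := by
    have := Finset.sum_sdiff (f := f) hQK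
    linarith [this, h0]
  have h3 : - ∑ i ∈ K \ Q, f i ≤ ((K \ Q).card : ℝ) * ζ := by
    have : ∑ i ∈ K \ Q, (-ζ) ≤ ∑ i ∈ K \ Q, f i :=
      Finset.sum_le_sum fun i hi => hbd i (Finset.sdiff_subset hi)
    rw [Finset.sum_const, nsmul_eq_mul] at this
    linarith
  have h4 : (K \ Q).card = K.card - R.card := by
    rw [Finset.card_sdiff_of_subset hQK, hQcard]
  rw [h4] at h3
  linarith

/-- Robust-boundedness of the scalar `b`-trimmed mean. -/
theorem stmt15 (n b : ℕ) (hb : 2 * b < n)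
    (z : Fin n → ℝ) (H : Finset (Fin n)) (hH : H.card = n - b)
    (zbar ζ α : ℝ)
    (hzbar : zbar = (∑ j ∈ H, z j) / ((n - b : ℕ) : ℝ))
    (hζ0 : 0 ≤ ζ)
    (hdev : ∀ j ∈ H, |z j - zbar| ≤ ζ)
    (hα : α = (b : ℝ) / n)
    (σ : Equiv.Perm (Fin n)) (hmono : Monotone (fun i => z (σ i)))
    (trimean : ℝ)
    (htm : trimean =
      (∑ i ∈ Finset.univ.filter (fun i : Fin n => b ≤ i.val ∧ i.val < n - b), z (σ i))
        / ((n - 2 * b : ℕ) : ℝ)) :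
    (trimean - zbar) ^ 2 ≤ 2 * (b : ℝ) * ((n : ℝ) - b) / ((n : ℝ) - 2 * b) ^ 2 * ζ ^ 2 ∧
      2 * (b : ℝ) * ((n : ℝ) - b) / ((n : ℝ) - 2 * b) ^ 2 =
        2 * α * (1 - α) / (1 - 2 * α) ^ 2 := by
  have hn0 : 0 < n := by omega
  have hbn : b ≤ n := by omega
  have hnbn : n - b ≤ n := by omega
  set w : Fin n → ℝ := fun i => z (σ i) with hw
  -- honest positions
  set K : Finset (Fin n) := H.map σ.symm.toEmbedding with hKdef
  have hKcard : K.card = n - b := by rw [hKdef, Finset.card_map, hH]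
  have hKsumz : ∑ i ∈ K, w i = ∑ j ∈ H, z j := by
    rw [hKdef, Finset.sum_map]
    simp [hw]
  -- blocks
  set Bot : Finset (Fin n) := Finset.univ.filter (fun i : Fin n => i.val < b) with hBot
  set Mid : Finset (Fin n) := Finset.univ.filter (fun i : Fin n => i.val < n - b) with hMid
  set R : Finset (Fin n) :=
    Finset.univ.filter (fun i : Fin n => b ≤ i.val ∧ i.val < n - b) with hR
  set Top : Finset (Fin n) := Finset.univ.filter (fun i : Fin n => n - b ≤ i.val) with hTop
  have hBotcard : Bot.card = b := aux_card n b hbn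
  have hMidcard : Mid.card = n - b := aux_card n (n - b) hnbn
  have hBotMid : Bot ⊆ Mid := by
    intro i hi
    simp only [hBot, hMid, Finset.mem_filter, Finset.mem_univ, true_and] at hi ⊢
    omega
  have hReq : R = Mid \ Bot := by
    ext i; simp only [hR, hMid, hBot, Finset.mem_filter, Finset.mem_sdiff, Finset.mem_univ,
      true_and]; omega
  have hRcard : R.card = n - 2 * b := by
    rw [hReq, Finset.card_sdiff_of_subset hBotMid, hMidcard, hBotcard]; omega
  have hTopeq : Top = Finset.univ \ Mid := by
    ext i; simp only [hTop, hMid, Finset.mem_filter, Finset.mem_sdiff, Finset.mem_univ,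
      true_and]; omega
  have hTopcard : Top.card = b := by
    rw [hTopeq, Finset.card_sdiff_of_subset (Finset.subset_univ _), hMidcard, Finset.card_univ,
      Fintype.card_fin]; omega
  -- dishonest count
  have hdish : (Finset.univ \ K).card = b := by
    rw [Finset.card_sdiff_of_subset (Finset.subset_univ _), Finset.card_univ, Fintype.card_fin,
      hKcard]; omega
  have hRTop : Disjoint R Top := by
    rw [Finset.disjoint_left]
    intro i hi hi'
    simp only [hR, hTop, Finset.mem_filter, Finset.mem_univ, true_and] at hi hi'
    omega
  have hRBot : Disjoint R Bot := by
    rw [Finset.disjoint_left]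
    intro i hi hi'
    simp only [hR, hBot, Finset.mem_filter, Finset.mem_univ, true_and] at hi hi'
    omega
  -- cardinality comparisons
  have hcardTop : (R \ K).card ≤ (Top ∩ K).card := by
    have h1 : (R \ K) ∪ (Top \ K) ⊆ Finset.univ \ K := by
      intro i hi
      simp only [Finset.mem_union, Finset.mem_sdiff, Finset.mem_univ, true_and] at hi ⊢
      tauto
    have h2 : Disjoint (R \ K) (Top \ K) :=
      hRTop.mono Finset.sdiff_subset Finset.sdiff_subset
    have h3 := (Finset.card_le_card h1)
    rw [Finset.card_union_of_disjoint h2, hdish] at h3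
    have h4 : (Top ∩ K).card + (Top \ K).card = Top.card :=
      Finset.card_inter_add_card_sdiff Top K
    omega
  have hcardBot : (R \ K).card ≤ (Bot ∩ K).card := by
    have h1 : (R \ K) ∪ (Bot \ K) ⊆ Finset.univ \ K := by
      intro i hi
      simp only [Finset.mem_union, Finset.mem_sdiff, Finset.mem_univ, true_and] at hi ⊢
      tauto
    have h2 : Disjoint (R \ K) (Bot \ K) :=
      hRBot.mono Finset.sdiff_subset Finset.sdiff_subset
    have h3 := (Finset.card_le_card h1)
    rw [Finset.card_union_of_disjoint h2, hdish] at h3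
    have h4 : (Bot ∩ K).card + (Bot \ K).card = Bot.card :=
      Finset.card_inter_add_card_sdiff Bot K
    omega
  -- centered sum over K vanishes
  have hnb0 : ((n : ℝ) - b) ≠ 0 := by
    have : (b : ℝ) < n := by exact_mod_cast (by omega : b < n)
    linarith
  have hcastnb : ((n - b : ℕ) : ℝ) = (n : ℝ) - b := by
    push_cast [Nat.cast_sub hbn]; ring
  have hKzero : ∑ j ∈ K, (w j - zbar) = 0 := by
    rw [Finset.sum_sub_distrib, Finset.sum_const, hKcard, hKsumz, hzbar, nsmul_eq_mul,
      hcastnb, mul_comm, div_mul_cancel₀ _ hnb0, sub_self]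
  have hdevK : ∀ j ∈ K, |w j - zbar| ≤ ζ := by
    intro j hj
    rw [hKdef, Finset.mem_map] at hj
    obtain ⟨a, ha, rfl⟩ := hj
    simp only [hw, Equiv.coe_toEmbedding, Equiv.apply_symm_apply]
    exact hdev a ha
  have hKzero' : ∑ j ∈ K, (zbar - w j) = 0 := by
    have : ∑ j ∈ K, (zbar - w j) + ∑ j ∈ K, (w j - zbar) = 0 := by
      rw [← Finset.sum_add_distrib]; simp
    linarith
  -- upper bound
  have hub : ∑ i ∈ R, (w i - zbar) ≤ (b : ℝ) * ζ := by
    have := aux_sum_bound (fun i => w i - zbar) ζ K R Top hRTop hKzero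
      (fun j hj => by simpa using neg_le_of_abs_le (hdevK j hj))
      (fun a ha p hp => by
        have ha' : a ∈ R := (Finset.mem_sdiff.mp ha).1
        have hp' : p ∈ Top := (Finset.mem_inter.mp hp).1
        simp only [hR, hTop, Finset.mem_filter, Finset.mem_univ, true_and] at ha' hp'
        have hap : a ≤ p := by rw [Fin.le_def]; omega
        have := hmono hap
        show w a - zbar ≤ w p - zbar
        simp only [hw] at this ⊢
        linarith)
      hcardTop
    have hcc : K.card - R.card = b := by rw [hKcard, hRcard]; omega
    rwa [hcc] at this
  -- lower bound
  have hlb : ∑ i ∈ R, (zbar - w i) ≤ (b : ℝ) * ζ := by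
    have := aux_sum_bound (fun i => zbar - w i) ζ K R Bot hRBot hKzero'
      (fun j hj => by
        have h2 := hdevK j hj
        rw [abs_sub_comm] at h2
        simpa using neg_le_of_abs_le h2)
      (fun a ha p hp => by
        have ha' : a ∈ R := (Finset.mem_sdiff.mp ha).1
        have hp' : p ∈ Bot := (Finset.mem_inter.mp hp).1
        simp only [hR, hBot, Finset.mem_filter, Finset.mem_univ, true_and] at ha' hp'
        have hpa : p ≤ a := by rw [Fin.le_def]; omega
        have := hmono hpa
        show zbar - w a ≤ zbar - w p
        simp only [hw] at this ⊢
        linarith)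
      hcardBot
    have hcc : K.card - R.card = b := by rw [hKcard, hRcard]; omega
    rwa [hcc] at this
  -- combine
  have hS : |∑ i ∈ R, (w i - zbar)| ≤ (b : ℝ) * ζ := by
    rw [abs_le]
    refine ⟨?_, hub⟩
    have hneg : ∑ i ∈ R, (zbar - w i) = - ∑ i ∈ R, (w i - zbar) := by
      rw [← Finset.sum_neg_distrib]
      exact Finset.sum_congr rfl fun i _ => by ring
    rw [hneg] at hlb
    linarith
  have hx0 : (0 : ℝ) < (n : ℝ) - 2 * b := by
    have : (2 * b : ℝ) < n := by exact_mod_cast hb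
    linarith
  have hcast2 : ((n - 2 * b : ℕ) : ℝ) = (n : ℝ) - 2 * b := by
    push_cast [Nat.cast_sub (le_of_lt hb)]; ring
  have hTdiff : trimean - zbar = (∑ i ∈ R, (w i - zbar)) / ((n : ℝ) - 2 * b) := by
    rw [htm, hcast2, Finset.sum_sub_distrib, Finset.sum_const, hRcard, nsmul_eq_mul, hcast2,
      sub_div]
    congr 1
    exact (mul_div_cancel_left₀ zbar (ne_of_gt hx0)).symm
  constructor
  · rw [hTdiff, div_pow]
    have hbnb : (b : ℝ) ≤ (n : ℝ) - b := by
      have : (2 * b : ℝ) < n := by exact_mod_cast hb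
      linarith
    have hbpos : (0 : ℝ) ≤ (b : ℝ) := Nat.cast_nonneg b
    obtain ⟨hS1, hS2⟩ := abs_le.mp hS
    have hsq : (∑ i ∈ R, (w i - zbar)) ^ 2 ≤ ((b : ℝ) * ζ) ^ 2 := sq_le_sq' hS1 hS2
    have h2n : (0 : ℝ) ≤ 2 * (n : ℝ) - 3 * b := by
      have : (2 * b : ℝ) < n := by exact_mod_cast hb
      linarith
    have h1 : (∑ i ∈ R, (w i - zbar)) ^ 2 ≤ 2 * (b : ℝ) * ((n : ℝ) - b) * ζ ^ 2 := by
      nlinarith [hsq, mul_nonneg (mul_nonneg hbpos h2n) (sq_nonneg ζ)]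
    calc (∑ i ∈ R, (w i - zbar)) ^ 2 / ((n : ℝ) - 2 * b) ^ 2
        ≤ (2 * (b : ℝ) * ((n : ℝ) - b) * ζ ^ 2) / ((n : ℝ) - 2 * b) ^ 2 := by
          gcongr
      _ = 2 * (b : ℝ) * ((n : ℝ) - b) / ((n : ℝ) - 2 * b) ^ 2 * ζ ^ 2 := by
          rw [div_mul_eq_mul_div]
  · rw [hα]
    have hn0' : (n : ℝ) ≠ 0 := by positivity
    have hx0' : (n : ℝ) - 2 * b ≠ 0 := ne_of_gt hx0
    rw [show (1 : ℝ) - (b : ℝ) / n = ((n : ℝ) - b) / n by field_simp,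
      show (1 : ℝ) - 2 * ((b : ℝ) / n) = ((n : ℝ) - 2 * b) / n by field_simp]
    rw [show 2 * ((b : ℝ) / n) * (((n : ℝ) - b) / n) = 2 * (b : ℝ) * ((n : ℝ) - b) / n ^ 2 by
      ring, div_pow, div_div_div_cancel_right₀]
    positivity
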